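/- Let U₀, X ∈ R^{n×r} with X of rank r, and let σ_r > 0 be the smallest nonzero eigenvalue of XXᵀ. Then min_{O ∈ O(r)} ‖U₀ − XO‖_F² ≤ ‖U₀U₀ᵀ − XXᵀ‖_F² / ((2√2 − 2)σ_r). -/

import Mathlib

open Matrix

private lemma sum_sq_eq_trace {n r : ℕ} (M : Matrix (Fin n) (Fin r) ℝ) :
    ∑ i, ∑ j, (M i j)^2 = Matrix.trace (Mᵀ * M) := by
  rw [Matrix.trace, Finset.sum_comm]
  simp [Matrix.diag, Matrix.mul_apply, sq]

private lemma scalar_key {c g r t lam : ℝ} (hc : c^2 = 2) (hc1 : 1 ≤ c)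
    (hg : 0 ≤ g) (hlam : 0 ≤ lam) (hlr : lam ≤ r) (htr : 0 ≤ t + r) :
    2*(c-1)*lam*g ≤ g^2 + 2*g*r + 2*t^2 + 4*g*t := by
  have hc2 : c ≤ 3/2 := by nlinarith
  have hlg : (c-1) * (lam * g) ≤ (c-1) * (r * g) := by
    apply mul_le_mul_of_nonneg_left (by nlinarith) (by linarith)
  rcases le_total g r with h | h
  · nlinarith [sq_nonneg (t+g), mul_nonneg hg (sub_nonneg.2 h)]
  · have hgc : 0 ≤ g^2 - 2*c*(g*r) + 2*r^2 := by nlinarith [sq_nonneg (g - c*r)]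
    nlinarith [sq_nonneg (t+r), mul_nonneg htr (sub_nonneg.2 h)]


private lemma vmv_mul_vmv {r : ℕ} (a b c d : Fin r → ℝ) :
    Matrix.vecMulVec a b * Matrix.vecMulVec c d = (b ⬝ᵥ c) • Matrix.vecMulVec a d := by
  ext i j
  simp only [Matrix.mul_apply, Matrix.vecMulVec_apply, Matrix.smul_apply, dotProduct,
    smul_eq_mul, Finset.sum_mul, Finset.mul_sum]
  exact Finset.sum_congr rfl fun k _ => by ring

private lemma trace_mul_vmv {r : ℕ} (K : Matrix (Fin r) (Fin r) ℝ) (u w : Fin r → ℝ) :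
    Matrix.trace (K * Matrix.vecMulVec u w) = w ⬝ᵥ (K *ᵥ u) := by
  simp only [Matrix.trace, Matrix.diag, Matrix.mul_apply, Matrix.vecMulVec_apply, dotProduct,
    Matrix.mulVec, Finset.mul_sum]
  exact Finset.sum_congr rfl fun i _ => Finset.sum_congr rfl fun k _ => by ring

private lemma householder_orth {r : ℕ} (v : Fin r → ℝ) (hv : v ⬝ᵥ v ≠ 0) :
    (1 - (2 / (v ⬝ᵥ v)) • Matrix.vecMulVec v v) *
      (1 - (2 / (v ⬝ᵥ v)) • Matrix.vecMulVec v v)ᵀ = 1 := by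
  have hsym : (Matrix.vecMulVec v v)ᵀ = Matrix.vecMulVec v v := by
    ext i j; simp [Matrix.vecMulVec_apply, mul_comm]
  rw [Matrix.transpose_sub, Matrix.transpose_one, Matrix.transpose_smul, hsym]
  simp only [Matrix.sub_mul, Matrix.mul_sub, Matrix.smul_mul, Matrix.mul_smul, one_mul, mul_one,
    vmv_mul_vmv, smul_smul]
  rw [div_mul_cancel₀ (2:ℝ) hv]
  module

private lemma posSemidef_of_trace_max {r : ℕ} (K : Matrix (Fin r) (Fin r) ℝ)
    (h : ∀ Q : Matrix (Fin r) (Fin r) ℝ, Q * Qᵀ = 1 → Matrix.trace (K * Q) ≤ Matrix.trace K) :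
    K.PosSemidef := by
  have quad : ∀ v : Fin r → ℝ, 0 ≤ v ⬝ᵥ (K *ᵥ v) := by
    intro v
    rcases eq_or_ne v 0 with rfl | hv
    · simp
    · have hvv : (0:ℝ) < v ⬝ᵥ v := by
        rcases (Function.ne_iff).1 hv with ⟨i, hi⟩
        have : (0:ℝ) < v i * v i := mul_self_pos.2 hi
        exact lt_of_lt_of_le this (Finset.single_le_sum (f := fun k => v k * v k)
          (fun k _ => mul_self_nonneg _) (Finset.mem_univ i))
      have hQ := h _ (householder_orth v hvv.ne')
      rw [Matrix.mul_sub, Matrix.mul_one, Matrix.mul_smul, Matrix.trace_sub,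
        Matrix.trace_smul, trace_mul_vmv, smul_eq_mul] at hQ
      have ha : (0:ℝ) < 2 / (v ⬝ᵥ v) := by positivity
      by_contra hq
      push_neg at hq
      nlinarith [mul_pos ha (neg_pos.2 hq)]
  have pair : ∀ u w : Fin r → ℝ, u ⬝ᵥ u ≠ 0 → w ⬝ᵥ w ≠ 0 →
      (2/(u ⬝ᵥ u)) * ((2/(w ⬝ᵥ w)) * ((u ⬝ᵥ w) * (w ⬝ᵥ (K *ᵥ u))))
        ≤ (2/(u ⬝ᵥ u)) * (u ⬝ᵥ (K *ᵥ u)) + (2/(w ⬝ᵥ w)) * (w ⬝ᵥ (K *ᵥ w)) := by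
    intro u w hu hw
    set au := 2/(u ⬝ᵥ u) with hau
    set aw := 2/(w ⬝ᵥ w) with haw
    set Qu := 1 - au • Matrix.vecMulVec u u with hQu
    set Qw := 1 - aw • Matrix.vecMulVec w w with hQw
    have hQ : (Qu * Qw) * (Qu * Qw)ᵀ = 1 := by
      rw [Matrix.transpose_mul, Matrix.mul_assoc, ← Matrix.mul_assoc Qw,
        householder_orth w hw, Matrix.one_mul, householder_orth u hu]
    have hQle := h _ hQ
    have hexp : Qu * Qw = 1 - aw • Matrix.vecMulVec w w - au • Matrix.vecMulVec u u
        + au • (aw • ((u ⬝ᵥ w) • Matrix.vecMulVec u w)) := by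
      rw [hQu, hQw]
      simp only [Matrix.sub_mul, Matrix.mul_sub, Matrix.smul_mul, Matrix.mul_smul, one_mul,
        mul_one, vmv_mul_vmv, smul_sub]
      rw [smul_comm aw au]
      abel
    rw [hexp, Matrix.mul_add, Matrix.mul_sub, Matrix.mul_sub, Matrix.mul_one,
      Matrix.mul_smul, Matrix.mul_smul, Matrix.mul_smul, Matrix.mul_smul, Matrix.mul_smul,
      Matrix.trace_add, Matrix.trace_sub, Matrix.trace_sub,
      Matrix.trace_smul, Matrix.trace_smul, Matrix.trace_smul, Matrix.trace_smul,
      Matrix.trace_smul, trace_mul_vmv, trace_mul_vmv, trace_mul_vmv] at hQle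
    simp only [smul_eq_mul] at hQle
    linarith [hQle]
  have symm : ∀ i j : Fin r, K i j = K j i := by
    intro i j
    rcases eq_or_ne i j with rfl | hij
    · rfl
    · set a := K i i with hadef
      set b := K j j with hbdef
      set p := K i j with hpdef
      set q := K j i with hqdef
      have ha : 0 ≤ a := by
        have := quad (fun k => if k = i then (1:ℝ) else 0)
        simpa [Matrix.mulVec, dotProduct] using this
      have hb : 0 ≤ b := by
        have := quad (fun k => if k = j then (1:ℝ) else 0)
        simpa [Matrix.mulVec, dotProduct] using this
      have key : ∀ ε : ℝ, 0 ≤ ε^2*(a+b) + ε*(p-q) := by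
        intro ε
        have h1e : (0:ℝ) < 1 + ε^2 := by positivity
        set u : Fin r → ℝ := fun k => if k = i then 1 else 0 with hudef
        set w : Fin r → ℝ := fun k => u k + ε * (if k = j then 1 else 0) with hwdef
        have hKu : K *ᵥ u = fun k => K k i := by
          ext k; simp [Matrix.mulVec, dotProduct, hudef]
        have hKw : K *ᵥ w = fun k => K k i + ε * K k j := by
          ext k
          simp [Matrix.mulVec, dotProduct, hwdef, hudef, mul_add, mul_ite,
            Finset.sum_add_distrib, mul_comm, mul_left_comm]
        have huu : u ⬝ᵥ u = 1 := by
          simp [dotProduct, hudef]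
        have hww : w ⬝ᵥ w = 1 + ε^2 := by
          simp [dotProduct, hwdef, hudef, add_mul, mul_add, ite_mul, mul_ite,
            Finset.sum_add_distrib, hij, Ne.symm hij, sq]
          try ring
        have huw : u ⬝ᵥ w = 1 := by
          simp [dotProduct, hwdef, hudef, mul_add, ite_mul, mul_ite,
            Finset.sum_add_distrib, hij, Ne.symm hij]
        have huKu : u ⬝ᵥ (K *ᵥ u) = a := by
          rw [hKu]; simp [dotProduct, hudef, hadef]
        have hwKw : w ⬝ᵥ (K *ᵥ w) = a + ε*(p+q) + ε^2*b := by
          rw [hKw]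
          simp [dotProduct, hwdef, hudef, add_mul, mul_add, ite_mul, mul_ite,
            Finset.sum_add_distrib, hij, Ne.symm hij, hadef, hbdef, hpdef, hqdef, sq]
          try ring
        have hwKu : w ⬝ᵥ (K *ᵥ u) = a + ε*q := by
          rw [hKu]
          simp [dotProduct, hwdef, hudef, add_mul, ite_mul,
            Finset.sum_add_distrib, hij, Ne.symm hij, hadef, hqdef]
        have hp := pair u w (by rw [huu]; norm_num) (by rw [hww]; exact h1e.ne')
        rw [huu, hww, huw, huKu, hwKw, hwKu] at hp
        rw [div_one] at hp
        have hp2 := mul_le_mul_of_nonneg_left hp (le_of_lt h1e)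
        have hl : (1+ε^2) * (2 * (2 / (1+ε^2) * (1 * (a + ε*q)))) = 4*(a+ε*q) := by
          field_simp
          try ring
        have hr : (1+ε^2) * (2*a + 2 / (1+ε^2) * (a + ε*(p+q) + ε^2*b))
            = 2*a*(1+ε^2) + 2*(a + ε*(p+q) + ε^2*b) := by
          field_simp
          try ring
        rw [hl, hr] at hp2
        nlinarith [hp2]
      set d := p - q with hddef
      set s := a + b + 1 with hsdef
      have hs : (0:ℝ) < s := by rw [hsdef]; linarith
      have h1 := key (-(d/s))
      have hsq : s^2*((-(d/s))^2*(a+b) + (-(d/s))*d) = d^2*(a+b) - d^2*s := by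
        field_simp
        try ring
      have h3 : 0 ≤ d^2*(a+b) - d^2*s := by
        rw [← hsq]
        positivity
      have hd : d = 0 := by nlinarith [sq_nonneg d]
      have := sub_eq_zero.mp hd
      rw [hpdef, hqdef] at this
      exact this
  refine Matrix.PosSemidef.of_dotProduct_mulVec_nonneg ?_ ?_
  · rw [Matrix.IsHermitian, Matrix.conjTranspose_eq_transpose_of_trivial]
    ext i j
    rw [Matrix.transpose_apply]
    exact symm j i
  · intro x
    simpa using quad x


private lemma gram_lower_bound_diag {n r : ℕ} (A B : Matrix (Fin n) (Fin r) ℝ) (lam : ℝ)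
    (g : Fin r → ℝ) (hg : ∀ i, 0 ≤ g i)
    (hdiag : (A - B)ᵀ * (A - B) = Matrix.diagonal g)
    (hS : (Aᵀ * B).PosSemidef)
    (hR : (Bᵀ * B - lam • 1).PosSemidef) (hlam : 0 ≤ lam) :
    2*(Real.sqrt 2 - 1) * lam * Matrix.trace ((A - B)ᵀ * (A - B))
      ≤ Matrix.trace ((A * Aᵀ - B * Bᵀ)ᵀ * (A * Aᵀ - B * Bᵀ)) := by
  set c := Real.sqrt 2 with hcdef
  have hc : c^2 = 2 := Real.sq_sqrt (by norm_num)
  have hc1 : (1:ℝ) ≤ c := by nlinarith [Real.sqrt_nonneg 2]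
  set P := Aᵀ * A with hPdef
  set R := Bᵀ * B with hRdef
  set S := Aᵀ * B with hSdef
  have hSsym : Sᵀ = S := by
    have := hS.1
    rwa [Matrix.IsHermitian, Matrix.conjTranspose_eq_transpose_of_trivial] at this
  have hBA : Bᵀ * A = S := by
    rw [← hSsym, hSdef, Matrix.transpose_mul, Matrix.transpose_transpose]
  set T := S - R with hTdef
  set G := Matrix.diagonal g with hGdef
  have hTsym : Tᵀ = T := by
    rw [hTdef, Matrix.transpose_sub, hSsym, hRdef, Matrix.transpose_mul,
      Matrix.transpose_transpose]
  have hGeq : G = P + R - (S + S) := by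
    rw [← hdiag, Matrix.transpose_sub, Matrix.sub_mul, Matrix.mul_sub, Matrix.mul_sub, hBA,
      ← hPdef, ← hRdef, ← hSdef]
    abel
  -- cyclic helper
  have hcyc : ∀ C E : Matrix (Fin n) (Fin r) ℝ, ∀ D F : Matrix (Fin n) (Fin r) ℝ,
      Matrix.trace ((C * Dᵀ) * (E * Fᵀ)) = Matrix.trace ((Dᵀ * E) * (Fᵀ * C)) := by
    intro C E D F
    rw [Matrix.mul_assoc, Matrix.trace_mul_comm]
    congr 1
    simp only [Matrix.mul_assoc]
  have hLHS : Matrix.trace ((A * Aᵀ - B * Bᵀ)ᵀ * (A * Aᵀ - B * Bᵀ))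
      = Matrix.trace (P*P) + Matrix.trace (R*R) - 2*Matrix.trace (S*S) := by
    rw [Matrix.transpose_sub, Matrix.transpose_mul, Matrix.transpose_mul,
      Matrix.transpose_transpose, Matrix.transpose_transpose, Matrix.sub_mul, Matrix.mul_sub,
      Matrix.mul_sub, Matrix.trace_sub, Matrix.trace_sub, Matrix.trace_sub,
      hcyc A A A A, hcyc A B A B, hcyc B A B A, hcyc B B B B, hBA, hPdef, hRdef, hSdef]
    ring
  have hmain : Matrix.trace (P*P) + Matrix.trace (R*R) - 2*Matrix.trace (S*S)
      = Matrix.trace (G*G) + 2*Matrix.trace (G*R) + 2*Matrix.trace (T*T)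
        + 4*Matrix.trace (G*T) := by
    rw [hGeq, hTdef]
    simp only [Matrix.add_mul, Matrix.mul_add, Matrix.sub_mul, Matrix.mul_sub,
      Matrix.trace_add, Matrix.trace_sub]
    rw [Matrix.trace_mul_comm R P, Matrix.trace_mul_comm S P, Matrix.trace_mul_comm S R]
    ring
  have htrGG : Matrix.trace (G*G) = ∑ i, (g i)^2 := by
    rw [hGdef, Matrix.diagonal_mul_diagonal, Matrix.trace_diagonal]
    exact Finset.sum_congr rfl fun i _ => (sq (g i)).symm ▸ rfl
  have htrGR : Matrix.trace (G*R) = ∑ i, g i * R i i := by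
    rw [Matrix.trace]
    exact Finset.sum_congr rfl fun i _ => by
      rw [Matrix.diag]
      rw [hGdef, Matrix.diagonal_mul]
  have htrGT : Matrix.trace (G*T) = ∑ i, g i * T i i := by
    rw [Matrix.trace]
    exact Finset.sum_congr rfl fun i _ => by
      rw [Matrix.diag]
      rw [hGdef, Matrix.diagonal_mul]
  have htrTT : ∑ i, (T i i)^2 ≤ Matrix.trace (T*T) := by
    have hTT : Matrix.trace (T*T) = ∑ i, ∑ j, T i j * T j i := by
      simp [Matrix.trace, Matrix.diag, Matrix.mul_apply]
    rw [hTT]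
    apply Finset.sum_le_sum
    intro i _
    have : ∀ j, T i j * T j i = (T i j)^2 := by
      intro j
      have hji : T j i = T i j := by
        conv_lhs => rw [← hTsym, Matrix.transpose_apply]
      rw [hji, sq]
    rw [Finset.sum_congr rfl fun j _ => this j]
    exact Finset.single_le_sum (f := fun j => (T i j)^2) (fun j _ => sq_nonneg _)
      (Finset.mem_univ i)
  have hRd : ∀ i, lam ≤ R i i := by
    intro i
    have := hR.dotProduct_mulVec_nonneg (fun k => if k = i then (1:ℝ) else 0)
    simp [dotProduct, Matrix.mulVec, Matrix.sub_apply, Matrix.smul_apply, Matrix.one_apply,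
      mul_ite, ite_mul, Finset.sum_sub_distrib] at this
    linarith [this]
  have hSd : ∀ i, 0 ≤ S i i := by
    intro i
    have := hS.dotProduct_mulVec_nonneg (fun k => if k = i then (1:ℝ) else 0)
    simp only [star_trivial, dotProduct, Matrix.mulVec, smul_eq_mul, mul_ite, mul_one, mul_zero,
      ite_mul, zero_mul, Finset.sum_ite_eq', Finset.mem_univ, if_true] at this
    linarith [this]
  have hTR : ∀ i, T i i + R i i = S i i := by
    intro i
    rw [hTdef, Matrix.sub_apply]
    ring
  have hsum : ∀ i, 2*(c-1)*lam*(g i)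
      ≤ (g i)^2 + 2*(g i)*(R i i) + 2*(T i i)^2 + 4*(g i)*(T i i) := by
    intro i
    exact scalar_key hc hc1 (hg i) hlam (hRd i) (by rw [hTR i]; exact hSd i)
  have htrG : Matrix.trace ((A - B)ᵀ * (A - B)) = ∑ i, g i := by
    rw [hdiag, Matrix.trace_diagonal]
  have e2 : ∑ i, ((g i)^2 + 2*(g i)*(R i i) + 2*(T i i)^2 + 4*(g i)*(T i i))
      = (∑ i, (g i)^2) + 2*(∑ i, g i * R i i) + 2*(∑ i, (T i i)^2) + 4*(∑ i, g i * T i i) := by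
    rw [Finset.mul_sum, Finset.mul_sum, Finset.mul_sum, ← Finset.sum_add_distrib,
      ← Finset.sum_add_distrib, ← Finset.sum_add_distrib]
    exact Finset.sum_congr rfl fun i _ => by ring
  have hA := Finset.sum_le_sum (fun i (_ : i ∈ Finset.univ) => hsum i)
  rw [e2] at hA
  rw [htrG, hLHS, hmain, Finset.mul_sum, htrGG, htrGR, htrGT]
  linarith [htrTT, hA]


private lemma gram_lower_bound {n r : ℕ} (A B : Matrix (Fin n) (Fin r) ℝ) (lam : ℝ)
    (hS : (Aᵀ * B).PosSemidef)
    (hR : (Bᵀ * B - lam • 1).PosSemidef) (hlam : 0 ≤ lam) :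
    2*(Real.sqrt 2 - 1) * lam * Matrix.trace ((A - B)ᵀ * (A - B))
      ≤ Matrix.trace ((A * Aᵀ - B * Bᵀ)ᵀ * (A * Aᵀ - B * Bᵀ)) := by
  have hG : ((A - B)ᵀ * (A - B)).PosSemidef := by
    have := Matrix.posSemidef_conjTranspose_mul_self (A - B)
    rwa [Matrix.conjTranspose_eq_transpose_of_trivial] at this
  have hH := hG.1
  set V : Matrix (Fin r) (Fin r) ℝ :=
    (Matrix.IsHermitian.eigenvectorUnitary hH : Matrix (Fin r) (Fin r) ℝ) with hVdef
  have hstar : star V = Vᵀ := by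
    rw [Matrix.star_eq_conjTranspose, Matrix.conjTranspose_eq_transpose_of_trivial]
  have hVV' : Vᵀ * V = 1 := by
    rw [← hstar]; exact (Matrix.IsHermitian.eigenvectorUnitary hH).prop.1
  have hVV : V * Vᵀ = 1 := by
    rw [← hstar]; exact (Matrix.IsHermitian.eigenvectorUnitary hH).prop.2
  set g := hH.eigenvalues with hgdef
  have hg : ∀ i, 0 ≤ g i := hG.eigenvalues_nonneg
  have hkey : Vᵀ * ((A - B)ᵀ * (A - B)) * V = Matrix.diagonal g := by
    have hspec : (A - B)ᵀ * (A - B) = V * Matrix.diagonal g * Vᵀ := by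
      have := hH.spectral_theorem
      rw [Unitary.conjStarAlgAut_apply, RCLike.ofReal_real_eq_id, Function.id_comp] at this
      rw [← hstar]; exact this
    rw [hspec]
    simp only [Matrix.mul_assoc]
    rw [hVV', Matrix.mul_one, ← Matrix.mul_assoc, hVV', Matrix.one_mul]
  set A' := A * V with hA'def
  set B' := B * V with hB'def
  have hsub : A' - B' = (A - B) * V := by rw [hA'def, hB'def, Matrix.sub_mul]
  have hdiag : (A' - B')ᵀ * (A' - B') = Matrix.diagonal g := by
    rw [hsub, Matrix.transpose_mul, ← hkey]
    simp only [Matrix.mul_assoc]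
  have hS' : (A'ᵀ * B').PosSemidef := by
    have := hS.conjTranspose_mul_mul_same V
    rw [Matrix.conjTranspose_eq_transpose_of_trivial] at this
    have heq : A'ᵀ * B' = Vᵀ * (Aᵀ * B) * V := by
      rw [hA'def, hB'def, Matrix.transpose_mul]
      simp only [Matrix.mul_assoc]
    rwa [heq]
  have hR' : (B'ᵀ * B' - lam • 1).PosSemidef := by
    have := hR.conjTranspose_mul_mul_same V
    rw [Matrix.conjTranspose_eq_transpose_of_trivial] at this
    have heq : Vᵀ * (Bᵀ * B - lam • 1) * V = B'ᵀ * B' - lam • 1 := by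
      rw [Matrix.mul_sub, Matrix.sub_mul, Matrix.mul_smul, Matrix.mul_one, Matrix.smul_mul,
        hVV']
      congr 1
      rw [hB'def, Matrix.transpose_mul]
      simp only [Matrix.mul_assoc]
    rwa [heq] at this
  have hmain := gram_lower_bound_diag A' B' lam g hg hdiag hS' hR' hlam
  have htr1 : Matrix.trace ((A' - B')ᵀ * (A' - B')) = Matrix.trace ((A - B)ᵀ * (A - B)) := by
    rw [hsub, Matrix.transpose_mul]
    have e : Vᵀ * (A - B)ᵀ * ((A - B) * V) = Vᵀ * ((A - B)ᵀ * (A - B) * V) := by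
      simp only [Matrix.mul_assoc]
    rw [e, Matrix.trace_mul_comm]
    simp only [Matrix.mul_assoc]
    rw [hVV, Matrix.mul_one]
  have hAA : A' * A'ᵀ = A * Aᵀ := by
    rw [hA'def, Matrix.transpose_mul, Matrix.mul_assoc, ← Matrix.mul_assoc V, hVV,
      Matrix.one_mul]
  have hBB : B' * B'ᵀ = B * Bᵀ := by
    rw [hB'def, Matrix.transpose_mul, Matrix.mul_assoc, ← Matrix.mul_assoc V, hVV,
      Matrix.one_mul]
  rw [htr1, hAA, hBB] at hmain
  exact hmain


/-- Distance bound between low-rank factors in terms of their Gram matrices: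
`min_{O ∈ O(r)} ‖U₀ − XO‖_F² ≤ ‖U₀U₀ᵀ − XXᵀ‖_F² / ((2√2 − 2)σ_r)`, where `σ_r > 0`
is the smallest nonzero eigenvalue of `XXᵀ` (equivalently the smallest eigenvalue
of `XᵀX` when `rank X = r`). -/
theorem dist_factor_le_gram (n r : ℕ) (X U₀ : Matrix (Fin n) (Fin r) ℝ)
    (hrank : X.rank = r) (σr : ℝ) (hσpos : 0 < σr)
    (hσ : IsLeast (Set.range (Matrix.isHermitian_conjTranspose_mul_self X).eigenvalues) σr) :
    ∃ O : Matrix (Fin r) (Fin r) ℝ, O * Oᵀ = 1 ∧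
      (∀ O' : Matrix (Fin r) (Fin r) ℝ, O' * O'ᵀ = 1 →
        ∑ i, ∑ j, ((U₀ - X * O) i j) ^ 2 ≤ ∑ i, ∑ j, ((U₀ - X * O') i j) ^ 2) ∧
      ∑ i, ∑ j, ((U₀ - X * O) i j) ^ 2
        ≤ (∑ i, ∑ j, ((U₀ * U₀ᵀ - X * Xᵀ) i j) ^ 2) / ((2 * Real.sqrt 2 - 2) * σr) := by
  classical
  set C : Set (Matrix (Fin r) (Fin r) ℝ) := {W | W * Wᵀ = 1} with hCdef
  have h1C : (1 : Matrix (Fin r) (Fin r) ℝ) ∈ C := by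
    simp [hCdef]
  have hCc : IsCompact C := by
    have hclosed : IsClosed C := by
      have hCeq : C = (fun W : Matrix (Fin r) (Fin r) ℝ => W * Wᵀ) ⁻¹' {1} := by
        ext W; simp [hCdef]
      rw [hCeq]
      exact isClosed_singleton.preimage (continuous_id.matrix_mul continuous_id.matrix_transpose)
    have hD : IsCompact (Matrix.of '' (Set.pi Set.univ fun _ : Fin r =>
        Set.pi Set.univ fun _ : Fin r => Set.Icc (-1:ℝ) 1)) :=
      (isCompact_univ_pi fun _ => isCompact_univ_pi fun _ => isCompact_Icc).image
        (continuous_matrix fun i j => continuous_apply_apply i j)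
    apply IsCompact.of_isClosed_subset hD hclosed
    intro W hW
    have hWW : W * Wᵀ = 1 := hW
    have hbd : ∀ i j, W i j ∈ Set.Icc (-1:ℝ) 1 := by
      intro i j
      have hdiagone : ∑ k, W i k * W i k = 1 := by
        have := congrFun (congrFun hWW i) i
        simpa [Matrix.mul_apply, Matrix.one_apply] using this
      have hsq : W i j * W i j ≤ 1 := by
        rw [← hdiagone]
        exact Finset.single_le_sum (f := fun k => W i k * W i k)
          (fun k _ => mul_self_nonneg _) (Finset.mem_univ j)
      constructor
      · nlinarith
      · nlinarith
    exact ⟨Matrix.of.symm W, fun i _ => fun j _ => hbd i j, rfl⟩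
  set f : Matrix (Fin r) (Fin r) ℝ → ℝ := fun W => ∑ i, ∑ j, ((U₀ - X * W) i j)^2 with hfdef
  have hf : Continuous f := by
    apply continuous_finset_sum
    intro i _
    apply continuous_finset_sum
    intro j _
    exact ((continuous_const.sub (continuous_const.matrix_mul continuous_id)).matrix_elem i j).pow 2
  obtain ⟨O, hOC, hOmin⟩ := hCc.exists_isMinOn ⟨1, h1C⟩ hf.continuousOn
  have hO : O * Oᵀ = 1 := hOC
  have hOO : Oᵀ * O = 1 := mul_eq_one_comm.mp hO
  refine ⟨O, hO, fun O' hO' => isMinOn_iff.mp hOmin O' hO', ?_⟩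
  -- expansion of the objective on orthogonal matrices
  have fexpand : ∀ W : Matrix (Fin r) (Fin r) ℝ, W * Wᵀ = 1 →
      f W = Matrix.trace (U₀ᵀ * U₀) + Matrix.trace (Xᵀ * X)
        - 2 * Matrix.trace (U₀ᵀ * (X * W)) := by
    intro W hW
    rw [hfdef]
    simp only
    rw [sum_sq_eq_trace, Matrix.transpose_sub, Matrix.sub_mul, Matrix.mul_sub, Matrix.mul_sub,
      Matrix.trace_sub, Matrix.trace_sub, Matrix.trace_sub]
    have h1 : Matrix.trace ((X*W)ᵀ * U₀) = Matrix.trace (U₀ᵀ * (X*W)) := by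
      rw [← Matrix.trace_transpose, Matrix.transpose_mul, Matrix.transpose_transpose]
    have h2 : Matrix.trace ((X*W)ᵀ * (X*W)) = Matrix.trace (Xᵀ * X) := by
      rw [Matrix.transpose_mul, Matrix.mul_assoc, Matrix.trace_mul_comm]
      simp only [Matrix.mul_assoc]
      rw [hW, Matrix.mul_one]
    rw [h1, h2]
    ring
  -- the optimal alignment has PSD cross-gram
  have hSpsd : (U₀ᵀ * (X * O)).PosSemidef := by
    apply posSemidef_of_trace_max
    intro Q hQ
    have hOQ : (O*Q) * (O*Q)ᵀ = 1 := by
      rw [Matrix.transpose_mul, Matrix.mul_assoc, ← Matrix.mul_assoc Q, hQ, Matrix.one_mul, hO]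
    have hle := isMinOn_iff.mp hOmin (O*Q) hOQ
    rw [fexpand O hO, fexpand (O*Q) hOQ] at hle
    have he : Matrix.trace (U₀ᵀ * (X * (O*Q))) = Matrix.trace ((U₀ᵀ * (X*O)) * Q) := by
      simp only [Matrix.mul_assoc]
    rw [he] at hle
    linarith
  -- the lower bound on XᵀX
  have hXX : (Xᵀ * X - σr • 1).PosSemidef := by
    set hH := Matrix.isHermitian_conjTranspose_mul_self X with hHdef
    set W : Matrix (Fin r) (Fin r) ℝ :=
      (Matrix.IsHermitian.eigenvectorUnitary hH : Matrix (Fin r) (Fin r) ℝ) with hWdef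
    have hWW : W * star W = 1 := (Matrix.IsHermitian.eigenvectorUnitary hH).prop.2
    have hspec : Xᵀ * X = W * Matrix.diagonal hH.eigenvalues * star W := by
      have := hH.spectral_theorem
      rwa [Unitary.conjStarAlgAut_apply,
        RCLike.ofReal_real_eq_id, Function.id_comp] at this
    have hdecomp : Xᵀ * X - σr • 1
        = W * Matrix.diagonal (fun i => hH.eigenvalues i - σr) * star W := by
      have hdd : Matrix.diagonal (fun i => hH.eigenvalues i - σr)
          = Matrix.diagonal hH.eigenvalues - σr • 1 := by
        rw [← Matrix.diagonal_one, ← Matrix.diagonal_smul, Matrix.diagonal_sub]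
        congr 1
        ext i
        simp
      rw [hdd, Matrix.mul_sub, Matrix.sub_mul, Matrix.mul_smul, Matrix.mul_one,
        Matrix.smul_mul, hWW, hspec]
    rw [hdecomp]
    have hdpsd : (Matrix.diagonal (fun i => hH.eigenvalues i - σr)).PosSemidef := by
      apply Matrix.PosSemidef.diagonal
      intro i
      have := hσ.2 ⟨i, rfl⟩
      simp only [Pi.zero_apply]
      linarith
    have := hdpsd.mul_mul_conjTranspose_same W
    rwa [← Matrix.star_eq_conjTranspose] at this
  have hRpsd : ((X*O)ᵀ * (X*O) - σr • 1).PosSemidef := by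
    have hc := hXX.conjTranspose_mul_mul_same O
    rw [Matrix.conjTranspose_eq_transpose_of_trivial] at hc
    have heq : Oᵀ * (Xᵀ * X - σr • 1) * O = (X*O)ᵀ * (X*O) - σr • 1 := by
      rw [Matrix.mul_sub, Matrix.sub_mul, Matrix.mul_smul, Matrix.mul_one, Matrix.smul_mul,
        hOO]
      congr 1
      rw [Matrix.transpose_mul]
      simp only [Matrix.mul_assoc]
    rwa [heq] at hc
  have hkey := gram_lower_bound U₀ (X*O) σr hSpsd hRpsd hσpos.le
  have hBBt : (X*O) * (X*O)ᵀ = X * Xᵀ := by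
    rw [Matrix.transpose_mul, Matrix.mul_assoc, ← Matrix.mul_assoc O, hO, Matrix.one_mul]
  rw [hBBt] at hkey
  rw [sum_sq_eq_trace, sum_sq_eq_trace]
  have hc1 : 1 < Real.sqrt 2 := by
    nlinarith [Real.sqrt_nonneg 2, Real.sq_sqrt (show (0:ℝ) ≤ 2 by norm_num)]
  have hpos : 0 < (2 * Real.sqrt 2 - 2) * σr := by nlinarith
  rw [le_div_iff₀ hpos]
  nlinarith [hkey]
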